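/- Fix d ≥ 3. Define u_n(d) by u_1(d) = 1 and the recurrence in Corollary form: ((2n-3)!!)^{d-1} + ∑_{k=2}^{n} C(n-1,k-1)·((2n-2k-1)!!/k!)^{d-1}·2^k·u_k(d) = ((2n-1)!!)^{d-1} for n > 1; and define w_n(d) by w_n(d) = u_n(d) + ∑_{k=1}^{n-1} (k/n)·C(n,k)^d·u_k(d)·w_{n-k}(d). Then w_n(d) ~ 2^{-nd}·((2n)!)^{d-1} as n → ∞. -/

import Mathlib

open Nat Filter

/-- `(2n-1)!! = 1·3·5⋯(2n-1)`, the product of the first `n` odd positive integers. -/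
def oddDF (n : ℕ) : ℕ := ∏ i ∈ Finset.range n, (2 * i + 1)


lemma oddDF_zero : oddDF 0 = 1 := rfl

lemma oddDF_succ (n : ℕ) : oddDF (n+1) = oddDF n * (2*n+1) := Finset.prod_range_succ _ _

lemma oddDF_pos (n : ℕ) : 0 < oddDF n := Finset.prod_pos (fun i _ => by omega)

lemma fact_two_mul (n : ℕ) : (2*n)! = 2^n * n ! * oddDF n := by
  induction n with
  | zero => rfl
  | succ n ih =>
      have h : 2 * (n+1) = (2*n+1) + 1 := by ring
      rw [h, factorial_succ, factorial_succ, ih, oddDF_succ, factorial_succ, pow_succ]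
      ring

lemma key_identity {k n : ℕ} (h : k ≤ n) :
    n ! * oddDF n = (k ! * oddDF k) * ((n-k)! * oddDF (n-k)) * (2*n).choose (2*k) := by
  have h2 : 2*k ≤ 2*n := by omega
  have e1 := Nat.choose_mul_factorial_mul_factorial h2
  have hpos : 0 < 2^n := by positivity
  have key : 2^n * (n ! * oddDF n)
      = 2^n * ((k ! * oddDF k) * ((n-k)! * oddDF (n-k)) * (2*n).choose (2*k)) := by
    have hk : (2*k)! = 2^k * k ! * oddDF k := fact_two_mul k
    have hnk : (2*(n-k))! = 2^(n-k) * (n-k)! * oddDF (n-k) := fact_two_mul (n-k)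
    have hnn : (2*n)! = 2^n * n ! * oddDF n := fact_two_mul n
    have hsub : 2*n - 2*k = 2*(n-k) := by omega
    have hpow : 2^k * 2^(n-k) = 2^n := by rw [← pow_add]; congr 1; omega
    calc 2^n * (n ! * oddDF n) = (2*n)! := by rw [hnn]; ring
    _ = (2*n).choose (2*k) * (2*k)! * (2*n - 2*k)! := e1.symm
    _ = (2*n).choose (2*k) * (2^k * k ! * oddDF k) * (2^(n-k) * (n-k)! * oddDF (n-k)) := by
        rw [hsub, hk, hnk]
    _ = (2^k * 2^(n-k)) * ((k ! * oddDF k) * ((n-k)! * oddDF (n-k)) * (2*n).choose (2*k)) := by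
        ring
    _ = 2^n * ((k ! * oddDF k) * ((n-k)! * oddDF (n-k)) * (2*n).choose (2*k)) := by rw [hpow]
  exact Nat.eq_of_mul_eq_mul_left hpos key

lemma sq_choose_le {k n : ℕ} : n.choose k ^ 2 ≤ (2*n).choose (2*k) := by
  rw [two_mul, two_mul, Nat.add_choose_eq]
  have hmem : ((k, k) : ℕ × ℕ) ∈ Finset.HasAntidiagonal.antidiagonal (k + k) := by
    simp [Finset.HasAntidiagonal.mem_antidiagonal]
  calc n.choose k ^ 2 = n.choose k * n.choose k := sq (n.choose k)
  _ ≤ ∑ ij ∈ Finset.HasAntidiagonal.antidiagonal (k+k), n.choose ij.1 * n.choose ij.2 :=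
      Finset.single_le_sum (f := fun ij : ℕ × ℕ => n.choose ij.1 * n.choose ij.2) (fun i _ => Nat.zero_le _) hmem

lemma core_pow {d k n : ℕ} (hd : 3 ≤ d) (h : k ≤ n) :
    n.choose k ^ (d+1) ≤ (2*n).choose (2*k) ^ (d-1) := by
  have h1 : 1 ≤ n.choose k := Nat.choose_pos h
  calc n.choose k ^ (d+1) ≤ n.choose k ^ (2*(d-1)) :=
        Nat.pow_le_pow_right h1 (by omega)
  _ = (n.choose k ^ 2) ^ (d-1) := by rw [← pow_mul, mul_comm]
  _ ≤ (2*n).choose (2*k) ^ (d-1) := Nat.pow_le_pow_left sq_choose_le _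

noncomputable def tR (d n : ℕ) : ℝ := ((n ! * oddDF n : ℕ) : ℝ) ^ (d-1) / 2^n

lemma tR_pos (d n : ℕ) : 0 < tR d n := by
  have h : 0 < (n ! * oddDF n : ℕ) := Nat.mul_pos n.factorial_pos (oddDF_pos n)
  have h2 : (0:ℝ) < ((n ! * oddDF n : ℕ) : ℝ) := by exact_mod_cast h
  exact div_pos (pow_pos h2 _) (by positivity)

lemma oddDF_one : oddDF 1 = 1 := by simp [oddDF]

lemma tR_one (d : ℕ) : tR d 1 = 1/2 := by
  simp [tR, oddDF_one]

lemma key2 {k n : ℕ} (hk : k ≤ n) :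
    n ! * oddDF (n-k) * oddDF k * (2*n).choose (2*k) = n.choose k * (n ! * oddDF n) := by
  have h1 := key_identity hk
  have h2 := Nat.choose_mul_factorial_mul_factorial hk
  calc n ! * oddDF (n-k) * oddDF k * (2*n).choose (2*k)
      = (n.choose k * k ! * (n-k)!) * oddDF (n-k) * oddDF k * (2*n).choose (2*k) := by rw [h2]
    _ = n.choose k * ((k ! * oddDF k) * ((n-k)! * oddDF (n-k)) * (2*n).choose (2*k)) := by ring
    _ = n.choose k * (n ! * oddDF n) := by rw [← h1]

-- the core coefficient inequality
lemma coef_core {d k n : ℕ} (hd : 3 ≤ d) (hk1 : 1 ≤ k) (hk : k ≤ n) :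
    ((k:ℝ)/n) * (n.choose k : ℝ)^d / ((2*n).choose (2*k) : ℝ)^(d-1)
      ≤ ((k:ℝ)/n) / (n.choose k : ℝ) := by
  have hC : (0:ℝ) < (n.choose k : ℝ) := by exact_mod_cast Nat.choose_pos hk
  have hC2 : (0:ℝ) < ((2*n).choose (2*k) : ℝ)^(d-1) := by
    have : 0 < (2*n).choose (2*k) := Nat.choose_pos (by omega)
    positivity
  have hkn : (0:ℝ) ≤ (k:ℝ)/n := by positivity
  rw [div_le_div_iff₀ hC2 hC]
  have hpow : (n.choose k : ℝ)^(d+1) ≤ ((2*n).choose (2*k) : ℝ)^(d-1) := by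
    exact_mod_cast core_pow hd hk
  calc ((k:ℝ)/n) * (n.choose k:ℝ)^d * (n.choose k:ℝ)
      = ((k:ℝ)/n) * (n.choose k:ℝ)^(d+1) := by ring
    _ ≤ ((k:ℝ)/n) * ((2*n).choose (2*k):ℝ)^(d-1) := by
        exact mul_le_mul_of_nonneg_left hpow hkn


lemma tR_mul (d : ℕ) {k n : ℕ} (h : k ≤ n) :
    tR d k * tR d (n-k) * ((2*n).choose (2*k) : ℝ)^(d-1) = tR d n := by
  unfold tR
  have hcast : ((n ! * oddDF n : ℕ):ℝ)
      = ((k ! * oddDF k : ℕ):ℝ) * (((n-k)! * oddDF (n-k) : ℕ):ℝ) * ((2*n).choose (2*k):ℝ) := by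
    exact_mod_cast congrArg (Nat.cast : ℕ → ℝ) (key_identity h)
  have hp : (2:ℝ)^k * (2:ℝ)^(n-k) = 2^n := by rw [← pow_add]; congr 1; omega
  rw [hcast, mul_pow, mul_pow, _root_.div_mul_div_comm, div_mul_eq_mul_div,
    div_eq_div_iff (by positivity) (by positivity), ← hp]

lemma choose_cast_eq {k n : ℕ} (hk1 : 1 ≤ k) (hkn : k ≤ n) :
    ((n-1).choose (k-1) : ℝ) = (k:ℝ)/n * (n.choose k : ℝ) := by
  have hn : 1 ≤ n := le_trans hk1 hkn
  have h := Nat.add_one_mul_choose_eq (n-1) (k-1)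
  rw [Nat.sub_add_cancel hn, Nat.sub_add_cancel hk1] at h
  have hn0 : (n:ℝ) ≠ 0 := Nat.cast_ne_zero.mpr (by omega)
  have h2 := congrArg (Nat.cast : ℕ → ℝ) h
  push_cast at h2
  field_simp
  linarith

lemma coefW {d k n : ℕ} (hd : 3 ≤ d) (hk1 : 1 ≤ k) (hk : k ≤ n) :
    ((k:ℝ)/n) * (n.choose k : ℝ)^d * (tR d k * tR d (n-k))
      ≤ ((k:ℝ)/n) / (n.choose k : ℝ) * tR d n := by
  have hC2 : (0:ℝ) < ((2*n).choose (2*k):ℝ)^(d-1) := by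
    have : 0 < (2*n).choose (2*k) := Nat.choose_pos (by omega)
    have : (0:ℝ) < ((2*n).choose (2*k):ℝ) := by exact_mod_cast this
    positivity
  have hsplit : tR d k * tR d (n-k) = tR d n / ((2*n).choose (2*k):ℝ)^(d-1) := by
    rw [eq_div_iff hC2.ne']; exact tR_mul d hk
  rw [hsplit]
  calc ((k:ℝ)/n) * (n.choose k:ℝ)^d * (tR d n / ((2*n).choose (2*k):ℝ)^(d-1))
      = (((k:ℝ)/n) * (n.choose k:ℝ)^d / ((2*n).choose (2*k):ℝ)^(d-1)) * tR d n := by ring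
    _ ≤ (((k:ℝ)/n) / (n.choose k:ℝ)) * tR d n :=
        mul_le_mul_of_nonneg_right (coef_core hd hk1 hk) (tR_pos d n).le

lemma coefU {d k n : ℕ} (hd : 3 ≤ d) (hk1 : 1 ≤ k) (hkn : k ≤ n) :
    (((n-1).choose (k-1) : ℝ) * ((oddDF (n-k) : ℝ) / (k ! : ℝ)) ^ (d-1) * 2^k)
        * (((n !:ℝ))^(d-1)/2^n) * tR d k
      ≤ ((k:ℝ)/n) / (n.choose k : ℝ) * tR d n := by
  have hn : 1 ≤ n := le_trans hk1 hkn
  have hC2b : (0:ℝ) < ((2*n).choose (2*k):ℝ) := by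
    exact_mod_cast Nat.choose_pos (show 2*k ≤ 2*n by omega)
  have hkf : (0:ℝ) < (k ! : ℝ) := by exact_mod_cast k.factorial_pos
  have he2 : ((n ! * oddDF (n-k) * oddDF k : ℕ):ℝ)
      = (n.choose k:ℝ) * ((n ! * oddDF n : ℕ):ℝ) / ((2*n).choose (2*k):ℝ) := by
    rw [eq_div_iff hC2b.ne']
    exact_mod_cast congrArg (Nat.cast : ℕ → ℝ) (key2 hkn)
  have hmain : (((n-1).choose (k-1) : ℝ) * ((oddDF (n-k) : ℝ) / (k ! : ℝ)) ^ (d-1) * 2^k)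
        * (((n !:ℝ))^(d-1)/2^n) * tR d k
      = ((k:ℝ)/n) * (n.choose k:ℝ)^d / ((2*n).choose (2*k):ℝ)^(d-1) * tR d n := by
    rw [choose_cast_eq hk1 hkn]
    unfold tR
    obtain ⟨c, rfl⟩ : ∃ c, d = c + 3 := ⟨d - 3, by omega⟩
    have h1 : c + 3 - 1 = c + 2 := by omega
    rw [h1]
    have hA : ((oddDF (n-k):ℝ)/(k ! : ℝ)) * ((n !:ℝ)) * ((k ! * oddDF k : ℕ):ℝ)
        = ((n ! * oddDF (n-k) * oddDF k : ℕ):ℝ) := by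
      push_cast; field_simp
    calc ((k:ℝ)/n * (n.choose k:ℝ) * ((oddDF (n-k) : ℝ) / (k ! : ℝ)) ^ (c+2) * 2^k)
          * (((n !:ℝ))^(c+2)/2^n) * (((k ! * oddDF k : ℕ):ℝ)^(c+2)/2^k)
        = ((k:ℝ)/n * (n.choose k:ℝ))
            * (((oddDF (n-k):ℝ)/(k ! : ℝ)) * ((n !:ℝ)) * ((k ! * oddDF k : ℕ):ℝ))^(c+2) / 2^n := by
          rw [mul_pow, mul_pow]; field_simp
      _ = ((k:ℝ)/n * (n.choose k:ℝ))
            * ((n.choose k:ℝ) * ((n ! * oddDF n : ℕ):ℝ) / ((2*n).choose (2*k):ℝ))^(c+2) / 2^n := by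
          rw [hA, he2]
      _ = (k:ℝ)/n * (n.choose k:ℝ)^(c+3) / ((2*n).choose (2*k):ℝ)^(c+2)
            * (((n ! * oddDF n : ℕ):ℝ)^(c+2)/2^n) := by
          rw [div_pow, mul_pow]; field_simp; ring
  rw [hmain]
  exact mul_le_mul_of_nonneg_right (coef_core hd hk1 hkn) (tR_pos d n).le

lemma choose_two_le {n k : ℕ} (h2 : 2 ≤ k) (hk : k ≤ n - 2) (hn : 4 ≤ n) :
    n.choose 2 ≤ n.choose k := by
  have aux : ∀ j, 2 ≤ j → j ≤ n / 2 → n.choose 2 ≤ n.choose j := by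
    intro j
    induction j with
    | zero => omega
    | succ j ih =>
        intro h2j hj
        rcases Nat.lt_or_ge j 2 with h | h
        · have hj2 : j + 1 = 2 := by omega
          rw [hj2]
        · exact (ih h (by omega)).trans (Nat.choose_le_succ_of_lt_half_left (by omega))
  rcases le_or_gt k (n/2) with h | h
  · exact aux k h2 h
  · have hkn : k ≤ n := by omega
    have : n.choose (n - (n - k)) = n.choose (n-k) := Nat.choose_symm (by omega)
    have hrw : n.choose k = n.choose (n-k) := by
      rw [← this]; congr 1; omega
    rw [hrw]
    exact aux (n-k) (by omega) (by omega)

lemma two_choose_two (n : ℕ) : 2 * n.choose 2 = n * (n-1) := by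
  induction n with
  | zero => rfl
  | succ n ih =>
      rw [Nat.choose_succ_succ, Nat.choose_one_right, Nat.mul_add, ih]
      cases n with
      | zero => rfl
      | succ m => simp [Nat.succ_sub_one]; ring

lemma choose_two_cast (n : ℕ) (hn : 1 ≤ n) : ((n.choose 2 : ℕ) : ℝ) = (n:ℝ)*((n:ℝ)-1)/2 := by
  have h := two_choose_two n
  have h2 := congrArg (Nat.cast : ℕ → ℝ) h
  push_cast [Nat.cast_sub hn] at h2
  linarith

lemma gsum_le {n : ℕ} (hn : 4 ≤ n) :
    ∑ k ∈ Finset.Icc 2 (n-1), ((k:ℝ)/n)/(n.choose k)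
      ≤ 1/(n:ℝ) + 2*((n:ℝ)-3)*((n:ℝ)-2)/((n:ℝ)^2*((n:ℝ)-1)) := by
  have hx : (4:ℝ) ≤ (n:ℝ) := by exact_mod_cast hn
  have hsplit : Finset.Icc 2 (n-1) = insert (n-1) (Finset.Icc 2 (n-2)) := by
    ext x; simp [Finset.mem_Icc, Finset.mem_insert]; omega
  have hnotmem : n - 1 ∉ Finset.Icc 2 (n-2) := by simp [Finset.mem_Icc]; omega
  rw [hsplit, Finset.sum_insert hnotmem]
  have hterm : (((n-1 : ℕ):ℝ)/n)/(n.choose (n-1)) ≤ 1/(n:ℝ) := by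
    have hc : n.choose (n-1) = n := by
      have h1 : n.choose (n - 1) = n.choose 1 := by
        have := Nat.choose_symm (show 1 ≤ n by omega)
        rw [← this]
      rw [h1, Nat.choose_one_right]
    rw [hc]
    rw [div_div, div_le_div_iff₀ (by positivity) (by positivity)]
    have : ((n-1:ℕ):ℝ) ≤ (n:ℝ) := by exact_mod_cast Nat.sub_le n 1
    nlinarith
  have hmid : ∑ k ∈ Finset.Icc 2 (n-2), ((k:ℝ)/n)/(n.choose k)
      ≤ 2*((n:ℝ)-3)*((n:ℝ)-2)/((n:ℝ)^2*((n:ℝ)-1)) := by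
    have hbound : ∀ k ∈ Finset.Icc 2 (n-2),
        ((k:ℝ)/n)/(n.choose k) ≤ (((n:ℝ)-2)/n)/(n.choose 2) := by
      intro k hkmem
      rw [Finset.mem_Icc] at hkmem
      have hC2 : (0:ℝ) < (n.choose 2 : ℝ) := by
        exact_mod_cast Nat.choose_pos (show 2 ≤ n by omega)
      have hCk : (0:ℝ) < (n.choose k : ℝ) := by
        exact_mod_cast Nat.choose_pos (show k ≤ n by omega)
      have hle : (n.choose 2 : ℝ) ≤ (n.choose k : ℝ) := by
        exact_mod_cast choose_two_le hkmem.1 hkmem.2 hn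
      have hk2 : (k:ℝ) ≤ (n:ℝ)-2 := by
        have : (k:ℝ) ≤ ((n-2:ℕ):ℝ) := by exact_mod_cast hkmem.2
        have h2 : ((n-2:ℕ):ℝ) = (n:ℝ)-2 := by
          push_cast [Nat.cast_sub (show 2 ≤ n by omega)]; ring
        linarith
      rw [div_div, div_div, div_le_div_iff₀ (by positivity) (by positivity)]
      have h1 : (k:ℝ)*((n:ℝ)*(n.choose 2:ℝ)) ≤ ((n:ℝ)-2)*((n:ℝ)*(n.choose 2:ℝ)) := by
        apply mul_le_mul_of_nonneg_right hk2; positivity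
      have h2 : ((n:ℝ)-2)*((n:ℝ)*(n.choose 2:ℝ)) ≤ ((n:ℝ)-2)*((n:ℝ)*(n.choose k:ℝ)) := by
        apply mul_le_mul_of_nonneg_left (by nlinarith) (by nlinarith)
      linarith
    calc ∑ k ∈ Finset.Icc 2 (n-2), ((k:ℝ)/n)/(n.choose k)
        ≤ ∑ _k ∈ Finset.Icc 2 (n-2), (((n:ℝ)-2)/n)/(n.choose 2) :=
          Finset.sum_le_sum hbound
      _ = 2*((n:ℝ)-3)*((n:ℝ)-2)/((n:ℝ)^2*((n:ℝ)-1)) := by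
          rw [Finset.sum_const, Nat.card_Icc, nsmul_eq_mul,
            (show n - 2 + 1 - 2 = n - 3 from by omega), choose_two_cast n (by omega),
            Nat.cast_sub (show 3 ≤ n by omega)]
          have h0 : (n:ℝ) ≠ 0 := by positivity
          have h1 : (n:ℝ) - 1 ≠ 0 := by intro h; nlinarith
          push_cast
          field_simp
  have hterm' : (((n-1 : ℕ):ℝ)/n)/(n.choose (n-1)) = (((n-1:ℕ):ℝ)/n)/(n.choose (n-1)) := rfl
  push_cast at hterm ⊢
  linarith

lemma gA {n : ℕ} (hn : 2 ≤ n) :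
    ∑ k ∈ Finset.Icc 2 (n-1), ((k:ℝ)/n)/(n.choose k) ≤ 1/2 - 2/(n:ℝ)^2 := by
  rcases eq_or_lt_of_le hn with h2 | h2
  · rw [← h2]; norm_num
  rcases eq_or_lt_of_le (show 3 ≤ n by omega) with h3 | h3
  · rw [← h3]; norm_num [Finset.Icc_self]
  have hn4 : 4 ≤ n := by omega
  have hx : (4:ℝ) ≤ (n:ℝ) := by exact_mod_cast hn4
  have hx0 : (0:ℝ) < (n:ℝ) := by linarith
  have hx1 : (0:ℝ) < (n:ℝ) - 1 := by linarith
  have e1 : (1/2 - 2/(n:ℝ)^2) - (1/(n:ℝ) + 2*((n:ℝ)-3)*((n:ℝ)-2)/((n:ℝ)^2*((n:ℝ)-1)))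
      = ((n:ℝ)^3 - 7*(n:ℝ)^2 + 18*(n:ℝ) - 20)/(2*(n:ℝ)^2*((n:ℝ)-1)) := by
    field_simp; ring
  have hnum : (0:ℝ) ≤ (n:ℝ)^3 - 7*(n:ℝ)^2 + 18*(n:ℝ) - 20 := by
    nlinarith [mul_nonneg (by linarith : (0:ℝ) ≤ (n:ℝ)-4)
      (by nlinarith [sq_nonneg (2*(n:ℝ)-3)] : (0:ℝ) ≤ (n:ℝ)^2-3*(n:ℝ)+6)]
  have hq : (0:ℝ) ≤ ((n:ℝ)^3 - 7*(n:ℝ)^2 + 18*(n:ℝ) - 20)/(2*(n:ℝ)^2*((n:ℝ)-1)) := by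
    apply div_nonneg hnum; positivity
  linarith [gsum_le hn4]

lemma gB {n : ℕ} (hn : 4 ≤ n) :
    ∑ k ∈ Finset.Icc 2 (n-1), ((k:ℝ)/n)/(n.choose k) ≤ 3/(n:ℝ) := by
  have hx : (4:ℝ) ≤ (n:ℝ) := by exact_mod_cast hn
  have hx0 : (0:ℝ) < (n:ℝ) := by linarith
  have hx1 : (0:ℝ) < (n:ℝ) - 1 := by linarith
  have e1 : 3/(n:ℝ) - (1/(n:ℝ) + 2*((n:ℝ)-3)*((n:ℝ)-2)/((n:ℝ)^2*((n:ℝ)-1)))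
      = (8*(n:ℝ) - 12)/((n:ℝ)^2*((n:ℝ)-1)) := by
    field_simp; ring
  have hq : (0:ℝ) ≤ (8*(n:ℝ) - 12)/((n:ℝ)^2*((n:ℝ)-1)) := by
    apply div_nonneg (by linarith); positivity
  linarith [gsum_le hn]

lemma uEq {d : ℕ} (hd : 3 ≤ d) (u : ℕ → ℝ)
    (hurec : ∀ n : ℕ, 1 < n →
      (oddDF (n - 1) : ℝ) ^ (d - 1) +
        ∑ k ∈ Finset.Icc 2 n,
          ((n - 1).choose (k - 1) : ℝ) * ((oddDF (n - k) : ℝ) / (k ! : ℝ)) ^ (d - 1) *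
            2 ^ k * u k =
        (oddDF n : ℝ) ^ (d - 1))
    {n : ℕ} (hn : 2 ≤ n) :
    u n = tR d n - ((n ! * oddDF (n-1) : ℕ):ℝ)^(d-1)/2^n
      - ∑ k ∈ Finset.Icc 2 (n-1),
          (((n-1).choose (k-1) : ℝ) * ((oddDF (n-k) : ℝ)/(k !:ℝ))^(d-1) * 2^k)
            * (((n !:ℝ))^(d-1)/2^n) * u k := by
  have h := hurec n (by omega)
  have hsplit : Finset.Icc 2 n = insert n (Finset.Icc 2 (n-1)) := by
    ext x; simp [Finset.mem_Icc, Finset.mem_insert]; omega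
  have hnot : n ∉ Finset.Icc 2 (n-1) := by simp [Finset.mem_Icc]; omega
  rw [hsplit, Finset.sum_insert hnot] at h
  have hfne : ((n !:ℝ)) ≠ 0 := by
    have := n.factorial_pos; positivity
  have h2ne : ((2:ℝ)^n) ≠ 0 := by positivity
  have hfe : ((n !:ℝ))^(d-1) ≠ 0 := pow_ne_zero _ hfne
  simp only [Nat.sub_self, Nat.choose_self, oddDF_zero, Nat.cast_one, one_mul] at h
  -- h : oddDF(n-1)^e + ((1/n!)^e * 2^n * u n + Σ') = oddDF n ^ e
  have h2 : (2:ℝ)^n / ((n !:ℝ))^(d-1) * u n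
      = (oddDF n : ℝ)^(d-1) - (oddDF (n-1) : ℝ)^(d-1)
        - ∑ k ∈ Finset.Icc 2 (n-1),
            ((n-1).choose (k-1) : ℝ) * ((oddDF (n-k) : ℝ)/(k !:ℝ))^(d-1) * 2^k * u k := by
    rw [div_pow, one_pow] at h
    have ha : (1:ℝ)/((n !:ℝ))^(d-1) * 2^n * u n = 2^n/((n !:ℝ))^(d-1) * u n := by ring
    rw [ha] at h
    linarith
  have h3 : u n = ((oddDF n : ℝ)^(d-1) - (oddDF (n-1) : ℝ)^(d-1)
        - ∑ k ∈ Finset.Icc 2 (n-1),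
            ((n-1).choose (k-1) : ℝ) * ((oddDF (n-k) : ℝ)/(k !:ℝ))^(d-1) * 2^k * u k)
      * (((n !:ℝ))^(d-1)/2^n) := by
    rw [← h2]; field_simp
  rw [h3, sub_mul, sub_mul, Finset.sum_mul]
  congr 1
  · congr 1
    · unfold tR; push_cast; rw [mul_pow]; ring
    · push_cast; rw [mul_pow]; ring
  · apply Finset.sum_congr rfl
    intro k _
    ring

lemma mid_nonneg {d n : ℕ} : (0:ℝ) ≤ ((n ! * oddDF (n-1) : ℕ):ℝ)^(d-1)/2^n := by positivity

lemma mid_le {d n : ℕ} (hd : 3 ≤ d) (hn : 2 ≤ n) :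
    ((n ! * oddDF (n-1) : ℕ):ℝ)^(d-1)/2^n ≤ tR d n / (2*(n:ℝ)-1)^2 := by
  have hx : (2:ℝ) ≤ (n:ℝ) := by exact_mod_cast hn
  have hb : (1:ℝ) ≤ 2*(n:ℝ)-1 := by linarith
  have hM : ((n ! * oddDF (n-1) : ℕ):ℝ) * (2*(n:ℝ)-1) = ((n ! * oddDF n : ℕ):ℝ) := by
    have h0 : oddDF n = oddDF (n-1) * (2*(n-1)+1) := by
      nth_rewrite 1 [show n = (n-1)+1 by omega]
      rw [oddDF_succ]
    have hnat : n ! * oddDF (n-1) * (2*(n-1)+1) = n ! * oddDF n := by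
      rw [h0]; ring
    have hc := congrArg (Nat.cast : ℕ → ℝ) hnat
    push_cast [Nat.cast_sub (by omega : 1 ≤ n)] at hc
    push_cast
    linear_combination hc
  have hMe : ((n ! * oddDF (n-1) : ℕ):ℝ)^(d-1) * (2*(n:ℝ)-1)^(d-1)
      = ((n ! * oddDF n : ℕ):ℝ)^(d-1) := by rw [← mul_pow, hM]
  have hpow : (2*(n:ℝ)-1)^2 ≤ (2*(n:ℝ)-1)^(d-1) := pow_le_pow_right₀ hb (by omega)
  have hMnn : (0:ℝ) ≤ ((n ! * oddDF (n-1) : ℕ):ℝ)^(d-1) := by positivity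
  have key : ((n ! * oddDF (n-1) : ℕ):ℝ)^(d-1) * (2*(n:ℝ)-1)^2
      ≤ ((n ! * oddDF n : ℕ):ℝ)^(d-1) := by
    calc ((n ! * oddDF (n-1) : ℕ):ℝ)^(d-1) * (2*(n:ℝ)-1)^2
        ≤ ((n ! * oddDF (n-1) : ℕ):ℝ)^(d-1) * (2*(n:ℝ)-1)^(d-1) :=
          mul_le_mul_of_nonneg_left hpow hMnn
      _ = _ := hMe
  unfold tR
  rw [div_div, div_le_div_iff₀ (by positivity) (by positivity)]
  calc ((n ! * oddDF (n-1) : ℕ):ℝ)^(d-1) * (2^n * (2*(n:ℝ)-1)^2)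
      = (((n ! * oddDF (n-1) : ℕ):ℝ)^(d-1) * (2*(n:ℝ)-1)^2) * 2^n := by ring
    _ ≤ ((n ! * oddDF n : ℕ):ℝ)^(d-1) * 2^n :=
        mul_le_mul_of_nonneg_right key (by positivity)

section main
variable {d : ℕ} (hd : 3 ≤ d) (u : ℕ → ℝ)
variable (hurec : ∀ n : ℕ, 1 < n →
      (oddDF (n - 1) : ℝ) ^ (d - 1) +
        ∑ k ∈ Finset.Icc 2 n,
          ((n - 1).choose (k - 1) : ℝ) * ((oddDF (n - k) : ℝ) / (k ! : ℝ)) ^ (d - 1) *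
            2 ^ k * u k =
        (oddDF n : ℝ) ^ (d - 1))

include hd hurec

lemma sumU_bound {n : ℕ} (hn : 2 ≤ n)
    (hk : ∀ k, 2 ≤ k → k < n → 0 ≤ u k ∧ u k ≤ tR d k) :
    (0:ℝ) ≤ (∑ k ∈ Finset.Icc 2 (n-1),
          (((n-1).choose (k-1) : ℝ) * ((oddDF (n-k) : ℝ)/(k !:ℝ))^(d-1) * 2^k)
            * (((n !:ℝ))^(d-1)/2^n) * u k)
    ∧ (∑ k ∈ Finset.Icc 2 (n-1),
          (((n-1).choose (k-1) : ℝ) * ((oddDF (n-k) : ℝ)/(k !:ℝ))^(d-1) * 2^k)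
            * (((n !:ℝ))^(d-1)/2^n) * u k)
        ≤ (∑ k ∈ Finset.Icc 2 (n-1), ((k:ℝ)/n)/(n.choose k)) * tR d n := by
  constructor
  · apply Finset.sum_nonneg
    intro k hkm
    rw [Finset.mem_Icc] at hkm
    have huk := (hk k hkm.1 (by omega)).1
    have : (0:ℝ) ≤ (((n-1).choose (k-1) : ℝ) * ((oddDF (n-k) : ℝ)/(k !:ℝ))^(d-1) * 2^k)
            * (((n !:ℝ))^(d-1)/2^n) := by positivity
    exact mul_nonneg this huk
  · rw [Finset.sum_mul]
    apply Finset.sum_le_sum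
    intro k hkm
    rw [Finset.mem_Icc] at hkm
    obtain ⟨huk0, huk1⟩ := hk k hkm.1 (by omega)
    have hcoef : (0:ℝ) ≤ (((n-1).choose (k-1) : ℝ) * ((oddDF (n-k) : ℝ)/(k !:ℝ))^(d-1) * 2^k)
            * (((n !:ℝ))^(d-1)/2^n) := by positivity
    calc (((n-1).choose (k-1) : ℝ) * ((oddDF (n-k) : ℝ)/(k !:ℝ))^(d-1) * 2^k)
            * (((n !:ℝ))^(d-1)/2^n) * u k
        ≤ (((n-1).choose (k-1) : ℝ) * ((oddDF (n-k) : ℝ)/(k !:ℝ))^(d-1) * 2^k)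
            * (((n !:ℝ))^(d-1)/2^n) * tR d k := mul_le_mul_of_nonneg_left huk1 hcoef
      _ ≤ ((k:ℝ)/n)/(n.choose k) * tR d n := coefU hd (by omega) (by omega)

lemma uBound : ∀ n, 2 ≤ n → 0 ≤ u n ∧ u n ≤ tR d n := by
  intro n
  induction n using Nat.strong_induction_on with
  | _ n ih =>
    intro hn
    have hE := uEq hd u hurec hn
    obtain ⟨hS0, hS1⟩ := sumU_bound hd u hurec hn (fun k h2 hlt => ih k hlt h2)
    have hm0 := mid_nonneg (d := d) (n := n)
    have hx : (2:ℝ) ≤ (n:ℝ) := by exact_mod_cast hn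
    have hm1 : ((n ! * oddDF (n-1) : ℕ):ℝ)^(d-1)/2^n ≤ tR d n / 9 := by
      calc ((n ! * oddDF (n-1) : ℕ):ℝ)^(d-1)/2^n ≤ tR d n / (2*(n:ℝ)-1)^2 := mid_le hd hn
        _ ≤ tR d n / 9 := by
            apply div_le_div_of_nonneg_left (tR_pos d n).le (by norm_num) (by nlinarith)
    have hg := gA hn
    have hgS : (∑ k ∈ Finset.Icc 2 (n-1), ((k:ℝ)/n)/(n.choose k)) * tR d n
        ≤ (1/2 - 2/(n:ℝ)^2) * tR d n := mul_le_mul_of_nonneg_right hg (tR_pos d n).le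
    have h2n2 : (0:ℝ) ≤ 2/(n:ℝ)^2 * tR d n := mul_nonneg (by positivity) (tR_pos d n).le
    constructor
    · rw [hE]; nlinarith [tR_pos d n]
    · rw [hE]; linarith

lemma uLow {n : ℕ} (hn : 2 ≤ n) :
    tR d n - tR d n / (2*(n:ℝ)-1)^2
      - (∑ k ∈ Finset.Icc 2 (n-1), ((k:ℝ)/n)/(n.choose k)) * tR d n ≤ u n := by
  have hE := uEq hd u hurec hn
  obtain ⟨hS0, hS1⟩ := sumU_bound hd u hurec hn
    (fun k h2 _ => uBound hd u hurec k h2)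
  have hm1 := mid_le (d := d) hd hn
  rw [hE]
  linarith

end main

section wpart
variable {d : ℕ} (hd : 3 ≤ d) (u w : ℕ → ℝ) (hu1 : u 1 = 1)
variable (hurec : ∀ n : ℕ, 1 < n →
      (oddDF (n - 1) : ℝ) ^ (d - 1) +
        ∑ k ∈ Finset.Icc 2 n,
          ((n - 1).choose (k - 1) : ℝ) * ((oddDF (n - k) : ℝ) / (k ! : ℝ)) ^ (d - 1) *
            2 ^ k * u k =
        (oddDF n : ℝ) ^ (d - 1))

include hd hu1 hurec

lemma sumW_bound {n : ℕ} (hn : 2 ≤ n)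
    (hwlt : ∀ m, 1 ≤ m → m < n → 0 ≤ w m ∧ w m ≤ 2 * tR d m) :
    (0:ℝ) ≤ (∑ k ∈ Finset.Icc 1 (n-1), ((k:ℝ)/n) * (n.choose k : ℝ)^d * u k * w (n-k))
    ∧ (∑ k ∈ Finset.Icc 1 (n-1), ((k:ℝ)/n) * (n.choose k : ℝ)^d * u k * w (n-k))
        ≤ 4/(n:ℝ)^2 * tR d n
          + 2 * (∑ k ∈ Finset.Icc 2 (n-1), ((k:ℝ)/n)/(n.choose k)) * tR d n := by
  have huk : ∀ k, 1 ≤ k → k ≤ n - 1 → 0 ≤ u k := by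
    intro k h1 h2
    rcases eq_or_lt_of_le h1 with h | h
    · rw [← h, hu1]; norm_num
    · exact (uBound hd u hurec k h).1
  constructor
  · apply Finset.sum_nonneg
    intro k hkm
    rw [Finset.mem_Icc] at hkm
    have hw := (hwlt (n-k) (by omega) (by omega)).1
    have hu := huk k hkm.1 hkm.2
    have : (0:ℝ) ≤ ((k:ℝ)/n) * (n.choose k : ℝ)^d := by positivity
    exact mul_nonneg (mul_nonneg this hu) hw
  · have hsplit : Finset.Icc 1 (n-1) = insert 1 (Finset.Icc 2 (n-1)) := by
      ext x; simp [Finset.mem_Icc, Finset.mem_insert]; omega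
    have hnot : 1 ∉ Finset.Icc 2 (n-1) := by simp [Finset.mem_Icc]
    rw [hsplit, Finset.sum_insert hnot]
    have hterm1 : ((1:ℕ):ℝ)/n * (n.choose 1 : ℝ)^d * u 1 * w (n-1)
        ≤ 4/(n:ℝ)^2 * tR d n := by
      have hcw := coefW (k := 1) (n := n) hd le_rfl (by omega)
      rw [tR_one] at hcw
      have hw1 := (hwlt (n-1) (by omega) (by omega)).2
      have hw0 := (hwlt (n-1) (by omega) (by omega)).1
      have hnn : (0:ℝ) ≤ ((1:ℕ):ℝ)/n * (n.choose 1 : ℝ)^d := by positivity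
      have hc1 : (n.choose 1 : ℝ) = (n:ℝ) := by rw [Nat.choose_one_right]
      calc ((1:ℕ):ℝ)/n * (n.choose 1 : ℝ)^d * u 1 * w (n-1)
          = ((1:ℕ):ℝ)/n * (n.choose 1 : ℝ)^d * w (n-1) := by rw [hu1]; ring
        _ ≤ ((1:ℕ):ℝ)/n * (n.choose 1 : ℝ)^d * (2 * tR d (n-1)) :=
            mul_le_mul_of_nonneg_left hw1 hnn
        _ = 4 * (((1:ℕ):ℝ)/n * (n.choose 1 : ℝ)^d * (1/2 * tR d (n-1))) := by ring
        _ ≤ 4 * (((1:ℕ):ℝ)/n / (n.choose 1 : ℝ) * tR d n) := by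
            have := mul_le_mul_of_nonneg_left hcw (by norm_num : (0:ℝ) ≤ 4)
            linarith
        _ = 4/(n:ℝ)^2 * tR d n := by
            rw [hc1]; push_cast; ring
    have htail : ∑ k ∈ Finset.Icc 2 (n-1), ((k:ℝ)/n) * (n.choose k : ℝ)^d * u k * w (n-k)
        ≤ 2 * (∑ k ∈ Finset.Icc 2 (n-1), ((k:ℝ)/n)/(n.choose k)) * tR d n := by
      have hstep : ∑ k ∈ Finset.Icc 2 (n-1), ((k:ℝ)/n) * (n.choose k : ℝ)^d * u k * w (n-k)
          ≤ ∑ k ∈ Finset.Icc 2 (n-1), ((k:ℝ)/n)/(n.choose k) * (tR d n * 2) := by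
        apply Finset.sum_le_sum
        intro k hkm
        rw [Finset.mem_Icc] at hkm
        obtain ⟨hu0, hu1'⟩ := uBound hd u hurec k hkm.1
        obtain ⟨hw0, hw1⟩ := hwlt (n-k) (by omega) (by omega)
        have ha : (0:ℝ) ≤ ((k:ℝ)/n) * (n.choose k : ℝ)^d := by positivity
        have hcw := coefW (k := k) (n := n) hd (by omega) (by omega)
        calc ((k:ℝ)/n) * (n.choose k : ℝ)^d * u k * w (n-k)
            ≤ ((k:ℝ)/n) * (n.choose k : ℝ)^d * tR d k * w (n-k) := by
              apply mul_le_mul_of_nonneg_right _ hw0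
              exact mul_le_mul_of_nonneg_left hu1' ha
          _ ≤ ((k:ℝ)/n) * (n.choose k : ℝ)^d * tR d k * (2 * tR d (n-k)) := by
              apply mul_le_mul_of_nonneg_left hw1
              exact mul_nonneg ha (tR_pos d k).le
          _ = (((k:ℝ)/n) * (n.choose k : ℝ)^d * (tR d k * tR d (n-k))) * 2 := by ring
          _ ≤ (((k:ℝ)/n)/(n.choose k) * tR d n) * 2 :=
              mul_le_mul_of_nonneg_right hcw (by norm_num)
          _ = ((k:ℝ)/n)/(n.choose k) * (tR d n * 2) := by ring
      have heq : ∑ k ∈ Finset.Icc 2 (n-1), ((k:ℝ)/n)/(n.choose k) * (tR d n * 2)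
          = 2 * (∑ k ∈ Finset.Icc 2 (n-1), ((k:ℝ)/n)/(n.choose k)) * tR d n := by
        rw [← Finset.sum_mul]; ring
      linarith
    have hcast1 : ((1:ℕ):ℝ) = (1:ℝ) := by norm_num
    linarith [hterm1, htail]

lemma wBound (hwrec : ∀ n : ℕ, 1 ≤ n →
      w n = u n + ∑ k ∈ Finset.Icc 1 (n - 1),
        ((k : ℝ) / n) * (n.choose k : ℝ) ^ d * u k * w (n - k)) :
    ∀ n, 1 ≤ n → 0 ≤ w n ∧ w n ≤ 2 * tR d n := by
  intro n
  induction n using Nat.strong_induction_on with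
  | _ n ih =>
    intro hn
    rcases eq_or_lt_of_le hn with h1 | h1
    · have hw := hwrec 1 le_rfl
      simp only [Nat.sub_self] at hw
      rw [show Finset.Icc 1 0 = ∅ from rfl, Finset.sum_empty] at hw
      rw [← h1, hw, hu1, tR_one]
      norm_num
    · have hn2 : 2 ≤ n := h1
      have hw := hwrec n (by omega)
      obtain ⟨hS0, hS1⟩ := sumW_bound hd u w hu1 hurec hn2 (fun m h1 h2 => ih m h2 h1)
      obtain ⟨hu0, huT⟩ := uBound hd u hurec n hn2
      have hg := gA hn2
      have hgS : (∑ k ∈ Finset.Icc 2 (n-1), ((k:ℝ)/n)/(n.choose k)) * tR d n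
          ≤ (1/2 - 2/(n:ℝ)^2) * tR d n := mul_le_mul_of_nonneg_right hg (tR_pos d n).le
      have heq : 4/(n:ℝ)^2 * tR d n + 2 * ((1/2 - 2/(n:ℝ)^2) * tR d n) = tR d n := by ring
      constructor
      · rw [hw]; linarith
      · rw [hw]; linarith

end wpart

lemma denom_eq {d : ℕ} (hd : 3 ≤ d) (n : ℕ) :
    ((2:ℝ)^(n*d))⁻¹ * ((2*n)! : ℝ)^(d-1) = tR d n := by
  obtain ⟨c, rfl⟩ : ∃ c, d = c + 3 := ⟨d - 3, by omega⟩
  have h1 : ((2*n)! : ℝ) = 2^n * ((n ! * oddDF n : ℕ):ℝ) := by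
    rw [fact_two_mul]; push_cast; ring
  unfold tR
  rw [h1, show c+3-1 = c+2 from by omega, mul_pow, ← pow_mul,
    show n*(c+3) = n*(c+2) + n from by ring, pow_add]
  have h2 : ((2:ℝ)^(n*(c+2))) ≠ 0 := by positivity
  have h3 : ((2:ℝ)^n) ≠ 0 := by positivity
  field_simp


theorem stmt15 (d : ℕ) (hd : 3 ≤ d) (u w : ℕ → ℝ) (hu1 : u 1 = 1)
    (hurec : ∀ n : ℕ, 1 < n →
      (oddDF (n - 1) : ℝ) ^ (d - 1) +
        ∑ k ∈ Finset.Icc 2 n,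
          ((n - 1).choose (k - 1) : ℝ) * ((oddDF (n - k) : ℝ) / (k ! : ℝ)) ^ (d - 1) *
            2 ^ k * u k =
        (oddDF n : ℝ) ^ (d - 1))
    (hwrec : ∀ n : ℕ, 1 ≤ n →
      w n = u n + ∑ k ∈ Finset.Icc 1 (n - 1),
        ((k : ℝ) / n) * (n.choose k : ℝ) ^ d * u k * w (n - k)) :
    Tendsto
      (fun n : ℕ => w n / (((2 : ℝ) ^ (n * d))⁻¹ * ((2 * n)! : ℝ) ^ (d - 1)))
      atTop (nhds 1) := by
  have hconv : (fun n : ℕ => w n / (((2:ℝ)^(n*d))⁻¹ * ((2*n)! : ℝ)^(d-1)))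
      = fun n : ℕ => w n / tR d n := by
    funext n; rw [denom_eq hd]
  rw [hconv]
  have hwB := wBound hd u w hu1 hurec hwrec
  have hlow : ∀ᶠ n : ℕ in atTop, 1 - 4/(n:ℝ) ≤ w n / tR d n := by
    filter_upwards [eventually_ge_atTop (4:ℕ)] with n hn4
    have hx : (4:ℝ) ≤ (n:ℝ) := by exact_mod_cast hn4
    have hx0 : (0:ℝ) < (n:ℝ) := by linarith
    have htp := tR_pos d n
    rw [le_div_iff₀ htp]
    obtain ⟨hS0, _⟩ := sumW_bound hd u w hu1 hurec (show 2 ≤ n by omega)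
      (fun m h1 _ => hwB m h1)
    have hw := hwrec n (by omega)
    have hul := uLow hd u hurec (show 2 ≤ n by omega)
    have hA : tR d n / (2*(n:ℝ)-1)^2 ≤ tR d n / (n:ℝ) := by
      apply div_le_div_of_nonneg_left htp.le hx0 (by nlinarith)
    have hgB := gB hn4
    have hgS : (∑ k ∈ Finset.Icc 2 (n-1), ((k:ℝ)/n)/(n.choose k)) * tR d n
        ≤ 3/(n:ℝ) * tR d n := mul_le_mul_of_nonneg_right hgB htp.le
    have he1 : tR d n / (n:ℝ) = 1/(n:ℝ) * tR d n := by ring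
    have he2 : (1 - 4/(n:ℝ)) * tR d n
        = tR d n - 1/(n:ℝ) * tR d n - 3/(n:ℝ) * tR d n := by ring
    rw [hw, he2]
    linarith
  have hup : ∀ᶠ n : ℕ in atTop, w n / tR d n ≤ 1 + 10/(n:ℝ) := by
    filter_upwards [eventually_ge_atTop (4:ℕ)] with n hn4
    have hx : (4:ℝ) ≤ (n:ℝ) := by exact_mod_cast hn4
    have hx0 : (0:ℝ) < (n:ℝ) := by linarith
    have htp := tR_pos d n
    rw [div_le_iff₀ htp]
    obtain ⟨_, hS1⟩ := sumW_bound hd u w hu1 hurec (show 2 ≤ n by omega)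
      (fun m h1 _ => hwB m h1)
    have hw := hwrec n (by omega)
    obtain ⟨_, huT⟩ := uBound hd u hurec n (by omega)
    have hgB := gB hn4
    have hgS : 2 * (∑ k ∈ Finset.Icc 2 (n-1), ((k:ℝ)/n)/(n.choose k)) * tR d n
        ≤ 2 * (3/(n:ℝ)) * tR d n := by
      have := mul_le_mul_of_nonneg_right hgB htp.le
      nlinarith [htp]
    have hsq : 4/(n:ℝ)^2 * tR d n ≤ 4/(n:ℝ) * tR d n := by
      apply mul_le_mul_of_nonneg_right _ htp.le
      rw [div_le_div_iff₀ (by positivity) hx0]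
      nlinarith
    have he2 : (1 + 10/(n:ℝ)) * tR d n
        = tR d n + 4/(n:ℝ) * tR d n + 2 * (3/(n:ℝ)) * tR d n := by ring
    rw [hw, he2]
    linarith
  have l1 : Tendsto (fun n : ℕ => 1 - 4/(n:ℝ)) atTop (nhds 1) := by
    simpa using tendsto_const_nhds.sub (tendsto_const_div_atTop_nhds_zero_nat (4:ℝ))
  have l2 : Tendsto (fun n : ℕ => 1 + 10/(n:ℝ)) atTop (nhds 1) := by
    simpa using tendsto_const_nhds.add (tendsto_const_div_atTop_nhds_zero_nat (10:ℝ))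
  exact tendsto_of_tendsto_of_tendsto_of_le_of_le' l1 l2 hlow hup
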